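/- Let H1 = r0·I + ∑ r_i σ_i with r0,...,r3 real, let P = (p1,p2,p3) ≠ 0, and let e be a unit eigenvector of H0 = p0·I + ∑ p_i σ_i with eigenvalue p0 ± ‖P‖. Then ⟨H1 e, e⟩ = r0 ± (r1 p1 + r2 p2 + r3 p3)/‖P‖. -/

import Mathlib

open Complex Matrix

noncomputable def dotc (v w : Fin 2 → ℂ) : ℂ :=
  ∑ i, v i * starRingEnd ℂ (w i)

noncomputable def pauli : Fin 3 → Matrix (Fin 2) (Fin 2) ℂ
  | 0 => !![0, 1; 1, 0]
  | 1 => !![0, -I; I, 0]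
  | 2 => !![1, 0; 0, -1]

noncomputable def Hmat (a0 : ℝ) (a : Fin 3 → ℝ) : Matrix (Fin 2) (Fin 2) ℂ :=
  (a0 : ℂ) • (1 : Matrix (Fin 2) (Fin 2) ℂ) + ∑ i, (a i : ℂ) • pauli i

theorem subprincipal_expectation (p0 r0 : ℝ) (p r : Fin 3 → ℝ) (hP : p ≠ 0)
    (ε : ℝ) (hε : ε = 1 ∨ ε = -1) (e : Fin 2 → ℂ) (he : dotc e e = 1)
    (heig : (Hmat p0 p).mulVec e =
      ((p0 + ε * Real.sqrt (p 0 ^ 2 + p 1 ^ 2 + p 2 ^ 2) : ℝ) : ℂ) • e) :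
    dotc ((Hmat r0 r).mulVec e) e =
      ((r0 + ε * (r 0 * p 0 + r 1 * p 1 + r 2 * p 2) /
          Real.sqrt (p 0 ^ 2 + p 1 ^ 2 + p 2 ^ 2) : ℝ) : ℂ) := by
  set s : ℝ := Real.sqrt (p 0 ^ 2 + p 1 ^ 2 + p 2 ^ 2) with hs_def
  have hpos : 0 < p 0 ^ 2 + p 1 ^ 2 + p 2 ^ 2 := by
    have h3 : p 0 ≠ 0 ∨ p 1 ≠ 0 ∨ p 2 ≠ 0 := by
      by_contra h
      push_neg at h
      exact hP (funext fun i => by fin_cases i <;> simp [h.1, h.2.1, h.2.2])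
    rcases h3 with h | h | h <;> positivity
  have hs : 0 < s := Real.sqrt_pos.mpr hpos
  have hsC : (s : ℂ) ≠ 0 := by exact_mod_cast hs.ne'
  have eq0 := congrFun heig 0
  have eq1 := congrFun heig 1
  simp [Hmat, pauli, mulVec, dotProduct, Fin.sum_univ_three, Fin.sum_univ_two] at eq0 eq1
  have ceq0 := congrArg (starRingEnd ℂ) eq0
  have ceq1 := congrArg (starRingEnd ℂ) eq1
  simp only [map_add, RingHom.map_mul, map_neg, Complex.conj_ofReal, Complex.conj_I] at ceq0 ceq1
  simp only [dotc, Fin.sum_univ_two] at he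
  have hab : 2 * (ε : ℂ) * s * (e 0 * starRingEnd ℂ (e 1)) =
      (p 0 : ℂ) - I * (p 1 : ℂ) := by
    linear_combination (-(starRingEnd ℂ (e 1))) * eq0 - e 0 * ceq1 +
      ((p 0 : ℂ) - I * (p 1 : ℂ)) * he
  have hba : 2 * (ε : ℂ) * s * (e 1 * starRingEnd ℂ (e 0)) =
      (p 0 : ℂ) + I * (p 1 : ℂ) := by
    linear_combination (-(e 1)) * ceq0 - (starRingEnd ℂ (e 0)) * eq1 +
      ((p 0 : ℂ) + I * (p 1 : ℂ)) * he
  have hz : (ε : ℂ) * s * (e 0 * starRingEnd ℂ (e 0) - e 1 * starRingEnd ℂ (e 1)) =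
      (p 2 : ℂ) := by
    linear_combination (-(starRingEnd ℂ (e 0))) * eq0 + e 1 * ceq1 + (p 2 : ℂ) * he
  simp only [dotc, Hmat, pauli, mulVec, dotProduct, Fin.sum_univ_three, Fin.sum_univ_two,
    Matrix.add_apply, Matrix.smul_apply, Matrix.one_apply, Matrix.cons_val', Matrix.cons_val_zero,
    Matrix.cons_val_one, Matrix.head_cons, Matrix.head_fin_const, smul_eq_mul, Matrix.of_apply]
  push_cast
  rcases hε with rfl | rfl <;> push_cast at hab hba hz ⊢ <;> field_simp
  · linear_combination (r0 : ℂ) * s * he +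
      (((r 0 : ℂ) + I * (r 1 : ℂ)) / 2) * hab +
      (((r 0 : ℂ) - I * (r 1 : ℂ)) / 2) * hba + (r 2 : ℂ) * hz -
      ((r 1 : ℂ) * (p 1 : ℂ)) * Complex.I_sq
  · linear_combination (r0 : ℂ) * s * he -
      (((r 0 : ℂ) + I * (r 1 : ℂ)) / 2) * hab -
      (((r 0 : ℂ) - I * (r 1 : ℂ)) / 2) * hba - (r 2 : ℂ) * hz +
      ((r 1 : ℂ) * (p 1 : ℂ)) * Complex.I_sq
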